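/- Let (W_∗, F^∗) and (W'_∗, F'^∗) be ℝ-mixed Hodge structures on finite-dimensional real vector spaces V and V', and let f : V → V' be a real linear map with f(W_i) ⊆ W'_i for all i and f_ℂ(F^p) ⊆ F'^p for all p, where f_ℂ = f ⊗ id_ℂ. Let K = ker f, so that K_ℂ identifies with ker f_ℂ. Then the filtrations W_i(K) := W_i ∩ K and F^p(K_ℂ) := F^p ∩ ker f_ℂ form an ℝ-mixed Hodge structure on K. -/

import Mathlib

open TensorProduct

noncomputable section

namespace MHS

instance : RingHomSurjective (starRingEnd ℂ) :=
  ⟨fun x => ⟨star x, star_star x⟩⟩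

variable (V : Type*) [AddCommGroup V] [Module ℝ V]

/-- The inclusion `v ↦ 1 ⊗ v` of `V` into its complexification `ℂ ⊗[ℝ] V`. -/
def incl : V →ₗ[ℝ] ℂ ⊗[ℝ] V := TensorProduct.mk ℝ ℂ V 1

/-- Complex conjugation on the complexification `ℂ ⊗[ℝ] V`, as a
conjugate-linear (i.e. `starRingEnd ℂ`-semilinear) map. -/
def conjC : (ℂ ⊗[ℝ] V) →ₛₗ[starRingEnd ℂ] (ℂ ⊗[ℝ] V) where
  toFun := LinearMap.rTensor V (Complex.conjAe.toLinearMap : ℂ →ₗ[ℝ] ℂ)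
  map_add' := fun x y => map_add _ x y
  map_smul' := by
    intro c x
    induction x using TensorProduct.induction_on with
    | zero => simp
    | tmul a v =>
        simp only [TensorProduct.smul_tmul', LinearMap.rTensor_tmul, smul_eq_mul,
          AlgEquiv.toLinearMap_apply, map_mul, starRingEnd_apply]
        rfl
    | add x y hx hy =>
        simp only [smul_add, map_add]
        exact congrArg₂ (· + ·) hx hy

/-- The complexification `W ⊗ ℂ` of a real subspace `W ⊆ V`, as a complex
subspace of `ℂ ⊗[ℝ] V`. -/
def cx (W : Submodule ℝ V) : Submodule ℂ (ℂ ⊗[ℝ] V) :=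
  Submodule.span ℂ (incl V '' (W : Set V))

variable {V}

/-- `(W, F)` is an `ℝ`-mixed Hodge structure on `V`:  `W` is an increasing
exhaustive filtration of `V` by real subspaces, `F` a decreasing exhaustive
filtration of `ℂ ⊗[ℝ] V` by complex subspaces, and for every `n, p` the induced
filtration on `Gr^W_n = (W n ⊗ ℂ)/(W (n-1) ⊗ ℂ)` satisfies the weight `n`
Hodge decomposition conditions (expressed here at the level of preimages in
`W n ⊗ ℂ` of the relevant subspaces of the quotient). -/
structure IsRMHS (W : ℤ → Submodule ℝ V) (F : ℤ → Submodule ℂ (ℂ ⊗[ℝ] V)) : Prop where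
  monoW : Monotone W
  antiF : Antitone F
  w_bot : ∃ a : ℤ, ∀ i ≤ a, W i = ⊥
  w_top : ∃ b : ℤ, ∀ i, b ≤ i → W i = ⊤
  f_top : ∃ a : ℤ, ∀ p ≤ a, F p = ⊤
  f_bot : ∃ b : ℤ, ∀ p, b ≤ p → F p = ⊥
  gr_inf : ∀ n p : ℤ,
      ((F p ⊓ cx V (W n)) ⊔ cx V (W (n-1))) ⊓
        ((((F (n+1-p)).map (conjC V)) ⊓ cx V (W n)) ⊔ cx V (W (n-1)))
      = cx V (W (n-1))
  gr_sup : ∀ n p : ℤ,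
      (F p ⊓ cx V (W n)) ⊔ ((((F (n+1-p)).map (conjC V)) ⊓ cx V (W n)) ⊔ cx V (W (n-1)))
      = cx V (W n)

/-- The subspace `R^{p,q} = (W_{p+q} ⊗ ℂ) ∩ F^p`. -/
def Rpq (W : ℤ → Submodule ℝ V) (F : ℤ → Submodule ℂ (ℂ ⊗[ℝ] V)) (p q : ℤ) :
    Submodule ℂ (ℂ ⊗[ℝ] V) :=
  cx V (W (p + q)) ⊓ F p

/-- The subspace
`L^{p,q} = (W_{p+q} ⊗ ℂ) ∩ σ(F^q) + Σ_{i ≥ 2} (W_{p+q-i} ⊗ ℂ) ∩ σ(F^{q-i+1})`. -/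
def Lpq (W : ℤ → Submodule ℝ V) (F : ℤ → Submodule ℂ (ℂ ⊗[ℝ] V)) (p q : ℤ) :
    Submodule ℂ (ℂ ⊗[ℝ] V) :=
  (cx V (W (p + q)) ⊓ (F q).map (conjC V)) ⊔
    ⨆ i : ℤ, ⨆ _ : 2 ≤ i, (cx V (W (p + q - i)) ⊓ (F (q - i + 1)).map (conjC V))

/-- The Deligne subspace `I^{p,q} = R^{p,q} ∩ L^{p,q}`. -/
def Ipq (W : ℤ → Submodule ℝ V) (F : ℤ → Submodule ℂ (ℂ ⊗[ℝ] V)) (p q : ℤ) :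
    Submodule ℂ (ℂ ⊗[ℝ] V) :=
  Rpq W F p q ⊓ Lpq W F p q

end MHS
namespace MHS

variable (V : Type*) [AddCommGroup V] [Module ℝ V]

/-- Real part of an element of the complexification. -/
def reT : ℂ ⊗[ℝ] V →ₗ[ℝ] V :=
  TensorProduct.lift ((LinearMap.lsmul ℝ V).comp Complex.reLm)

/-- Imaginary part of an element of the complexification. -/
def imT : ℂ ⊗[ℝ] V →ₗ[ℝ] V :=
  TensorProduct.lift ((LinearMap.lsmul ℝ V).comp Complex.imLm)

variable {V}

@[simp] lemma reT_tmul (c : ℂ) (v : V) : reT V (c ⊗ₜ v) = c.re • v := rfl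

@[simp] lemma imT_tmul (c : ℂ) (v : V) : imT V (c ⊗ₜ v) = c.im • v := rfl

lemma one_tmul_reT_add (x : ℂ ⊗[ℝ] V) :
    (1:ℂ) ⊗ₜ[ℝ] reT V x + Complex.I ⊗ₜ[ℝ] imT V x = x := by
  induction x using TensorProduct.induction_on with
  | zero => simp
  | tmul c v =>
      rw [reT_tmul, imT_tmul, ← smul_tmul, ← smul_tmul, ← add_tmul]
      congr 1
      simp [Complex.real_smul]
  | add x y hx hy =>
      rw [map_add, map_add, tmul_add, tmul_add]
      rw [show (1:ℂ) ⊗ₜ[ℝ] reT V x + (1:ℂ) ⊗ₜ[ℝ] reT V y +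
        (Complex.I ⊗ₜ[ℝ] imT V x + Complex.I ⊗ₜ[ℝ] imT V y) =
        ((1:ℂ) ⊗ₜ[ℝ] reT V x + Complex.I ⊗ₜ[ℝ] imT V x) +
        ((1:ℂ) ⊗ₜ[ℝ] reT V y + Complex.I ⊗ₜ[ℝ] imT V y) by abel, hx, hy]

lemma eq_zero_iff_reT_imT {x : ℂ ⊗[ℝ] V} :
    x = 0 ↔ reT V x = 0 ∧ imT V x = 0 := by
  constructor
  · rintro rfl; simp
  · rintro ⟨h1, h2⟩
    rw [← one_tmul_reT_add x, h1, h2]; simp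

lemma reT_I_smul (x : ℂ ⊗[ℝ] V) : reT V (Complex.I • x) = - imT V x := by
  induction x using TensorProduct.induction_on with
  | zero => simp
  | tmul c v =>
      rw [TensorProduct.smul_tmul', reT_tmul, imT_tmul]
      simp [Complex.I_mul_re]
  | add x y hx hy => simp only [smul_add, map_add, hx, hy]; abel

lemma imT_I_smul (x : ℂ ⊗[ℝ] V) : imT V (Complex.I • x) = reT V x := by
  induction x using TensorProduct.induction_on with
  | zero => simp
  | tmul c v =>
      rw [TensorProduct.smul_tmul', reT_tmul, imT_tmul]
      simp [Complex.I_mul_im]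
  | add x y hx hy => simp only [smul_add, map_add, hx, hy]

lemma smul_decomp (c : ℂ) (x : ℂ ⊗[ℝ] V) :
    c • x = c.re • x + c.im • (Complex.I • x) := by
  have h1 : ∀ (r : ℝ) (y : ℂ ⊗[ℝ] V), (r : ℂ) • y = r • y := fun r y => by
    rw [← Complex.coe_algebraMap, algebraMap_smul]
  conv_lhs => rw [← Complex.re_add_im c]
  rw [add_smul, mul_smul, h1, h1]

end MHS
namespace MHS

variable {V : Type*} [AddCommGroup V] [Module ℝ V]

lemma reT_smul (c : ℂ) (x : ℂ ⊗[ℝ] V) :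
    reT V (c • x) = c.re • reT V x - c.im • imT V x := by
  rw [smul_decomp, map_add, map_smul, map_smul, reT_I_smul, smul_neg, sub_eq_add_neg]

lemma imT_smul (c : ℂ) (x : ℂ ⊗[ℝ] V) :
    imT V (c • x) = c.im • reT V x + c.re • imT V x := by
  rw [smul_decomp, map_add, map_smul, map_smul, imT_I_smul, add_comm]

@[simp] lemma incl_apply (v : V) : incl V v = (1:ℂ) ⊗ₜ[ℝ] v := rfl

lemma mem_cx_iff {A : Submodule ℝ V} {x : ℂ ⊗[ℝ] V} :
    x ∈ cx V A ↔ reT V x ∈ A ∧ imT V x ∈ A := by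
  constructor
  · intro hx
    refine Submodule.span_induction ?_ ?_ ?_ ?_ hx
    · rintro y ⟨v, hv, rfl⟩
      simp only [incl_apply, reT_tmul, imT_tmul, Complex.one_re, Complex.one_im,
        one_smul, zero_smul]
      exact ⟨hv, A.zero_mem⟩
    · simp only [map_zero]; exact ⟨A.zero_mem, A.zero_mem⟩
    · intro y z _ _ hy hz
      rw [map_add, map_add]
      exact ⟨A.add_mem hy.1 hz.1, A.add_mem hy.2 hz.2⟩
    · intro c y _ hy
      rw [reT_smul, imT_smul]
      exact ⟨A.sub_mem (A.smul_mem _ hy.1) (A.smul_mem _ hy.2),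
        A.add_mem (A.smul_mem _ hy.1) (A.smul_mem _ hy.2)⟩
  · rintro ⟨h1, h2⟩
    rw [← one_tmul_reT_add x]
    have hr : (1:ℂ) ⊗ₜ[ℝ] reT V x ∈ cx V A :=
      Submodule.subset_span ⟨reT V x, h1, rfl⟩
    have hi : (1:ℂ) ⊗ₜ[ℝ] imT V x ∈ cx V A :=
      Submodule.subset_span ⟨imT V x, h2, rfl⟩
    have hi' : Complex.I ⊗ₜ[ℝ] imT V x ∈ cx V A := by
      have := (cx V A).smul_mem Complex.I hi
      rwa [TensorProduct.smul_tmul', smul_eq_mul, mul_one] at this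
    exact (cx V A).add_mem hr hi'

lemma cx_mono {A B : Submodule ℝ V} (hAB : A ≤ B) : cx V A ≤ cx V B := fun x hx => by
  rw [mem_cx_iff] at hx ⊢; exact ⟨hAB hx.1, hAB hx.2⟩

lemma cx_inf (A B : Submodule ℝ V) : cx V (A ⊓ B) = cx V A ⊓ cx V B := by
  ext x; simp only [mem_cx_iff, Submodule.mem_inf]; tauto

@[simp] lemma cx_bot : cx V (⊥ : Submodule ℝ V) = ⊥ := by
  ext x
  simp only [mem_cx_iff, Submodule.mem_bot]
  exact ⟨fun h => eq_zero_iff_reT_imT.mpr h, by rintro rfl; simp⟩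

@[simp] lemma cx_top : cx V (⊤ : Submodule ℝ V) = ⊤ := by
  ext x; simp [mem_cx_iff]

@[simp] lemma conjC_tmul (c : ℂ) (v : V) :
    conjC V (c ⊗ₜ[ℝ] v) = (starRingEnd ℂ c) ⊗ₜ[ℝ] v := rfl

lemma reT_conjC (x : ℂ ⊗[ℝ] V) : reT V (conjC V x) = reT V x := by
  induction x using TensorProduct.induction_on with
  | zero => simp
  | tmul c v => simp
  | add x y hx hy => simp only [map_add, hx, hy]

lemma imT_conjC (x : ℂ ⊗[ℝ] V) : imT V (conjC V x) = - imT V x := by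
  induction x using TensorProduct.induction_on with
  | zero => simp
  | tmul c v => simp
  | add x y hx hy => simp only [map_add, hx, hy]; abel

@[simp] lemma conjC_conjC (x : ℂ ⊗[ℝ] V) : conjC V (conjC V x) = x := by
  induction x using TensorProduct.induction_on with
  | zero => simp
  | tmul c v => simp
  | add x y hx hy => simp only [map_add, hx, hy]

lemma mem_map_conjC {S : Submodule ℂ (ℂ ⊗[ℝ] V)} {x : ℂ ⊗[ℝ] V} :
    x ∈ S.map (conjC V) ↔ conjC V x ∈ S := by
  constructor
  · rintro ⟨y, hy, rfl⟩; rwa [conjC_conjC]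
  · intro hx; exact ⟨conjC V x, hx, conjC_conjC x⟩

lemma map_conjC_inf (S T : Submodule ℂ (ℂ ⊗[ℝ] V)) :
    (S ⊓ T).map (conjC V) = S.map (conjC V) ⊓ T.map (conjC V) := by
  ext x; simp only [mem_map_conjC, Submodule.mem_inf, mem_map_conjC]

@[simp] lemma map_conjC_map_conjC (S : Submodule ℂ (ℂ ⊗[ℝ] V)) :
    (S.map (conjC V)).map (conjC V) = S := by
  ext x; simp only [mem_map_conjC, conjC_conjC]

@[simp] lemma map_conjC_top : (⊤ : Submodule ℂ (ℂ ⊗[ℝ] V)).map (conjC V) = ⊤ := by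
  ext x
  simp only [Submodule.mem_map, Submodule.mem_top, true_and, iff_true]
  exact ⟨conjC V x, conjC_conjC x⟩

@[simp] lemma map_conjC_cx (A : Submodule ℝ V) : (cx V A).map (conjC V) = cx V A := by
  ext x
  simp only [mem_map_conjC, mem_cx_iff, reT_conjC, imT_conjC, neg_mem_iff]

end MHS
namespace MHS

variable {V : Type*} [AddCommGroup V] [Module ℝ V]
variable {V₂ : Type*} [AddCommGroup V₂] [Module ℝ V₂]

lemma map_conjC_sup (S T : Submodule ℂ (ℂ ⊗[ℝ] V)) :
    (S ⊔ T).map (conjC V) = S.map (conjC V) ⊔ T.map (conjC V) :=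
  Submodule.map_sup S T (conjC V)

lemma map_conjC_iSup {ι : Sort*} (S : ι → Submodule ℂ (ℂ ⊗[ℝ] V)) :
    (⨆ i, S i).map (conjC V) = ⨆ i, (S i).map (conjC V) :=
  Submodule.map_iSup (conjC V) S

lemma map_conjC_mono {S T : Submodule ℂ (ℂ ⊗[ℝ] V)} (hST : S ≤ T) :
    S.map (conjC V) ≤ T.map (conjC V) := Submodule.map_mono hST

@[simp] lemma baseChange_tmul' (g : V →ₗ[ℝ] V₂) (c : ℂ) (v : V) :
    g.baseChange ℂ (c ⊗ₜ[ℝ] v) = c ⊗ₜ[ℝ] g v := rfl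

lemma reT_baseChange (g : V →ₗ[ℝ] V₂) (x : ℂ ⊗[ℝ] V) :
    reT V₂ (g.baseChange ℂ x) = g (reT V x) := by
  induction x using TensorProduct.induction_on with
  | zero => simp
  | tmul c v => simp
  | add x y hx hy => simp only [map_add, hx, hy]

lemma imT_baseChange (g : V →ₗ[ℝ] V₂) (x : ℂ ⊗[ℝ] V) :
    imT V₂ (g.baseChange ℂ x) = g (imT V x) := by
  induction x using TensorProduct.induction_on with
  | zero => simp
  | tmul c v => simp
  | add x y hx hy => simp only [map_add, hx, hy]

lemma baseChange_conjC (g : V →ₗ[ℝ] V₂) (x : ℂ ⊗[ℝ] V) :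
    g.baseChange ℂ (conjC V x) = conjC V₂ (g.baseChange ℂ x) := by
  induction x using TensorProduct.induction_on with
  | zero => simp
  | tmul c v => simp
  | add x y hx hy => simp only [map_add, hx, hy]

lemma map_baseChange_conjC (g : V →ₗ[ℝ] V₂) (S : Submodule ℂ (ℂ ⊗[ℝ] V)) :
    (S.map (conjC V)).map (g.baseChange ℂ) =
      (S.map (g.baseChange ℂ)).map (conjC V₂) := by
  ext x
  constructor
  · rintro ⟨y, hy, rfl⟩
    rcases (mem_map_conjC).mp hy with h
    refine (mem_map_conjC).mpr ?_
    rw [← baseChange_conjC]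
    exact ⟨conjC V y, h, rfl⟩
  · intro hx
    rcases (mem_map_conjC).mp hx with ⟨y, hy, hyx⟩
    refine ⟨conjC V y, (mem_map_conjC).mpr (by rwa [conjC_conjC]), ?_⟩
    rw [baseChange_conjC, hyx, conjC_conjC]

lemma map_baseChange_cx (g : V →ₗ[ℝ] V₂) (A : Submodule ℝ V) :
    (cx V A).map (g.baseChange ℂ) = cx V₂ (A.map g) := by
  ext x
  simp only [Submodule.mem_map, mem_cx_iff]
  constructor
  · rintro ⟨y, ⟨h1, h2⟩, rfl⟩
    rw [reT_baseChange, imT_baseChange]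
    exact ⟨⟨_, h1, rfl⟩, ⟨_, h2, rfl⟩⟩
  · rintro ⟨⟨a, ha, hax⟩, ⟨b, hb, hbx⟩⟩
    refine ⟨(1:ℂ) ⊗ₜ[ℝ] a + Complex.I ⊗ₜ[ℝ] b, ?_, ?_⟩
    · constructor
      · rw [map_add, reT_tmul, reT_tmul]; simpa using ha
      · rw [map_add, imT_tmul, imT_tmul]; simpa using hb
    · rw [map_add, baseChange_tmul', baseChange_tmul', hax, hbx]
      exact one_tmul_reT_add x

lemma ker_baseChange_eq_cx (g : V →ₗ[ℝ] V₂) :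
    LinearMap.ker (g.baseChange ℂ) = cx V (LinearMap.ker g) := by
  ext x
  simp only [LinearMap.mem_ker, mem_cx_iff, LinearMap.mem_ker]
  rw [eq_zero_iff_reT_imT, reT_baseChange, imT_baseChange]

lemma baseChange_injective {g : V →ₗ[ℝ] V₂} (hg : Function.Injective g) :
    Function.Injective (g.baseChange ℂ) := by
  rw [← LinearMap.ker_eq_bot] at hg ⊢
  rw [ker_baseChange_eq_cx, hg, cx_bot]

/-- `comap` along an injective map commutes with `⊔` provided one of the terms lies in
the range. -/
lemma comap_sup_of_le_range {R M M₂ : Type*} [CommRing R] [AddCommGroup M] [Module R M]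
    [AddCommGroup M₂] [Module R M₂] {j : M →ₗ[R] M₂} (hj : Function.Injective j)
    {A B : Submodule R M₂} (hA : A ≤ LinearMap.range j) :
    (A ⊔ B).comap j = A.comap j ⊔ B.comap j := by
  refine le_antisymm ?_ (sup_le (Submodule.comap_mono le_sup_left)
    (Submodule.comap_mono le_sup_right))
  intro x hx
  rcases Submodule.mem_sup.mp hx with ⟨a, ha, b, hb, hab⟩
  rcases hA ha with ⟨u, rfl⟩
  have hbu : b = j (x - u) := by rw [map_sub, eq_sub_iff_add_eq, add_comm]; exact hab
  refine Submodule.mem_sup.mpr ⟨u, ha, x - u, ?_, by abel⟩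
  show j (x - u) ∈ B
  rw [← hbu]; exact hb

lemma map_conjC_comap_baseChange {g : V →ₗ[ℝ] V₂} (hg : Function.Injective g)
    {S : Submodule ℂ (ℂ ⊗[ℝ] V₂)} (hS : S ≤ LinearMap.range (g.baseChange ℂ)) :
    (S.comap (g.baseChange ℂ)).map (conjC V) =
      (S.map (conjC V₂)).comap (g.baseChange ℂ) := by
  have hinj := baseChange_injective hg
  ext x
  simp only [mem_map_conjC, Submodule.mem_comap]
  rw [baseChange_conjC]

end MHS
namespace MHS

variable {V : Type*} [AddCommGroup V] [Module ℝ V]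
variable (W : ℤ → Submodule ℝ V) (F : ℤ → Submodule ℂ (ℂ ⊗[ℝ] V))

lemma Ipq_le_cx (p q : ℤ) : Ipq W F p q ≤ cx V (W (p+q)) :=
  inf_le_left.trans inf_le_left

lemma Ipq_le_F (p q : ℤ) : Ipq W F p q ≤ F p :=
  inf_le_left.trans inf_le_right

lemma Ipq_le_Lpq (p q : ℤ) : Ipq W F p q ≤ Lpq W F p q := inf_le_right

/-- A conditional sum of the Deligne subspaces. -/
def ISum (P : ℤ × ℤ → Prop) : Submodule ℂ (ℂ ⊗[ℝ] V) :=
  ⨆ ab : ℤ × ℤ, ⨆ _ : P ab, Ipq W F ab.1 ab.2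

lemma le_ISum {P : ℤ × ℤ → Prop} {ab : ℤ × ℤ} (hab : P ab) :
    Ipq W F ab.1 ab.2 ≤ ISum W F P := by
  refine le_trans ?_ (le_iSup _ ab)
  exact le_iSup (fun _ : P ab => Ipq W F ab.1 ab.2) hab

lemma ISum_le {P : ℤ × ℤ → Prop} {T : Submodule ℂ (ℂ ⊗[ℝ] V)}
    (hT : ∀ ab : ℤ × ℤ, P ab → Ipq W F ab.1 ab.2 ≤ T) : ISum W F P ≤ T :=
  iSup_le fun ab => iSup_le fun hab => hT ab hab

lemma ISum_mono {P Q : ℤ × ℤ → Prop} (hPQ : ∀ ab, P ab → Q ab) :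
    ISum W F P ≤ ISum W F Q :=
  ISum_le W F fun ab hab => le_ISum W F (hPQ ab hab)

lemma ISum_sup (P Q : ℤ × ℤ → Prop) :
    ISum W F P ⊔ ISum W F Q = ISum W F (fun ab => P ab ∨ Q ab) := by
  refine le_antisymm (sup_le (ISum_mono W F fun ab h => Or.inl h)
    (ISum_mono W F fun ab h => Or.inr h)) ?_
  exact ISum_le W F fun ab hab => hab.elim
    (fun h => (le_ISum W F h).trans le_sup_left)
    (fun h => (le_ISum W F h).trans le_sup_right)

lemma exists_finsupp_of_mem_ISum {P : ℤ × ℤ → Prop} {x : ℂ ⊗[ℝ] V}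
    (hx : x ∈ ISum W F P) :
    ∃ l : (ℤ × ℤ) →₀ (ℂ ⊗[ℝ] V), (∀ ab, l ab ∈ Ipq W F ab.1 ab.2) ∧
      (∀ ab, ¬ P ab → l ab = 0) ∧ (l.sum fun _ y => y) = x := by
  rw [ISum, Submodule.mem_iSup_iff_exists_finsupp] at hx
  obtain ⟨l, hl, hsum⟩ := hx
  refine ⟨l, fun ab => ?_, fun ab hab => ?_, hsum⟩
  · exact (iSup_le fun _ => le_rfl : (⨆ _ : P ab, Ipq W F ab.1 ab.2) ≤ _) (hl ab)
  · have : (⨆ _ : P ab, Ipq W F ab.1 ab.2) ≤ ⊥ := iSup_le fun hp => absurd hp hab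
    simpa using this (hl ab)

lemma Lpq_le_head_sup_low (h : IsRMHS W F) {p q j : ℤ} (hj : 1 ≤ j) :
    Lpq W F p q ≤ (cx V (W (p+q)) ⊓ (F (q-j+1)).map (conjC V)) ⊔ cx V (W (p+q-j-1)) := by
  refine sup_le ?_ (iSup_le fun i => iSup_le fun hi => ?_)
  · exact le_sup_left.trans' (inf_le_inf le_rfl (map_conjC_mono (h.antiF (by omega))))
  · by_cases hij : i ≤ j
    · refine le_sup_left.trans' (inf_le_inf (cx_mono (h.monoW (by omega)))
        (map_conjC_mono (h.antiF (by omega))))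
    · exact le_sup_right.trans' (inf_le_left.trans (cx_mono (h.monoW (by omega))))

/-- Injectivity: `I^{p,q}` meets the lower weight part trivially. -/
lemma Ipq_inf_cx_eq_bot (h : IsRMHS W F) (p q : ℤ) :
    Ipq W F p q ⊓ cx V (W (p + q - 1)) = ⊥ := by
  obtain ⟨a, ha⟩ := h.w_bot
  have key : ∀ j, 1 ≤ j →
      Ipq W F p q ⊓ cx V (W (p + q - 1)) ≤ cx V (W (p + q - j)) := by
    refine Int.le_induction inf_le_right ?_
    intro j hj ih
    intro x hx
    have hxI : x ∈ Ipq W F p q := hx.1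
    have hxF : x ∈ F p := Ipq_le_F W F p q hxI
    have hxW : x ∈ cx V (W (p + q - j)) := ih hx
    have hxL : x ∈ (cx V (W (p+q)) ⊓ (F (q-j+1)).map (conjC V)) ⊔
        cx V (W (p+q-j-1)) :=
      Lpq_le_head_sup_low W F h hj (Ipq_le_Lpq W F p q hxI)
    have hmod : (cx V (W (p+q-j-1)) ⊔
          (cx V (W (p+q)) ⊓ (F (q-j+1)).map (conjC V))) ⊓ cx V (W (p+q-j))
        = cx V (W (p+q-j-1)) ⊔
          ((cx V (W (p+q)) ⊓ (F (q-j+1)).map (conjC V)) ⊓ cx V (W (p+q-j))) :=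
      sup_inf_assoc_of_le _ (cx_mono (h.monoW (by omega)))
    have hx2 : x ∈ ((F (q-j+1)).map (conjC V) ⊓ cx V (W (p+q-j))) ⊔
        cx V (W (p+q-j-1)) := by
      have hx1 : x ∈ (cx V (W (p+q-j-1)) ⊔
          (cx V (W (p+q)) ⊓ (F (q-j+1)).map (conjC V))) ⊓ cx V (W (p+q-j)) := by
        rw [sup_comm] at hxL
        exact ⟨hxL, hxW⟩
      rw [hmod] at hx1
      rw [sup_comm]
      have hle : cx V (W (p+q-j-1)) ⊔
            ((cx V (W (p+q)) ⊓ (F (q-j+1)).map (conjC V)) ⊓ cx V (W (p+q-j)))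
          ≤ cx V (W (p+q-j-1)) ⊔ ((F (q-j+1)).map (conjC V) ⊓ cx V (W (p+q-j))) :=
        sup_le_sup_left (le_inf (inf_le_left.trans inf_le_right) inf_le_right) _
      exact hle hx1
    have hgr := h.gr_inf (p + q - j) p
    have e1 : p + q - j + 1 - p = q - j + 1 := by omega
    rw [e1] at hgr
    have hx3 : x ∈ ((F p ⊓ cx V (W (p+q-j))) ⊔ cx V (W (p+q-j-1))) ⊓
        (((F (q-j+1)).map (conjC V) ⊓ cx V (W (p+q-j))) ⊔ cx V (W (p+q-j-1))) :=
      ⟨Submodule.mem_sup_left ⟨hxF, hxW⟩, hx2⟩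
    rw [show p + q - j - 1 = (p + q - j) - 1 from rfl] at hx3
    rw [hgr] at hx3
    rw [show p + q - (j+1) = p + q - j - 1 by omega]
    exact hx3
  have hend : Ipq W F p q ⊓ cx V (W (p + q - 1)) ≤ ⊥ := by
    refine (key (max 1 (p + q - a)) (le_max_left _ _)).trans ?_
    rw [ha (p + q - max 1 (p + q - a)) (by omega), cx_bot]
  exact le_bot_iff.mp hend

end MHS
namespace MHS

variable {V : Type*} [AddCommGroup V] [Module ℝ V]
variable (W : ℤ → Submodule ℝ V) (F : ℤ → Submodule ℂ (ℂ ⊗[ℝ] V))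

/-- Slot fitting: a Deligne subspace of lower total weight `a + b ≤ p + q - 1` with
`a ≤ p - 1` is contained in `L^{p,q}`. -/
lemma Ipq_le_Lpq_of_lt (h : IsRMHS W F) {a b p q : ℤ} (hab : a + b ≤ p + q - 1)
    (hap : a ≤ p - 1) : Ipq W F a b ≤ Lpq W F p q := by
  refine (Ipq_le_Lpq W F a b).trans (sup_le ?_ (iSup_le fun k => iSup_le fun hk => ?_))
  · by_cases htop : a + b = p + q - 1
    · refine le_sup_left.trans' ?_
      exact inf_le_inf (cx_mono (h.monoW (by omega))) (map_conjC_mono (h.antiF (by omega)))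
    · refine le_sup_right.trans' (le_iSup₂_of_le (p + q - (a + b)) (by omega) ?_)
      exact inf_le_inf (cx_mono (h.monoW (by omega))) (map_conjC_mono (h.antiF (by omega)))
  · refine le_sup_right.trans' (le_iSup₂_of_le (p + q - (a + b) + k) (by omega) ?_)
    exact inf_le_inf (cx_mono (h.monoW (by omega))) (map_conjC_mono (h.antiF (by omega)))

/-- Every element of lower weight splits into an `F`-remainder and a part in `L^{p,q}`. -/
lemma cx_le_rem_sup_Lpq (h : IsRMHS W F) (p q : ℤ)
    (hD1 : cx V (W (p + q - 1)) = ISum W F (fun ab => ab.1 + ab.2 ≤ p + q - 1)) :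
    cx V (W (p + q - 1)) ≤ (F p ⊓ cx V (W (p + q - 1))) ⊔ Lpq W F p q := by
  conv_lhs => rw [hD1]
  refine ISum_le W F fun ab hab => ?_
  by_cases hap : p ≤ ab.1
  · refine le_sup_left.trans' (le_inf ((Ipq_le_F W F _ _).trans (h.antiF hap)) ?_)
    exact (Ipq_le_cx W F _ _).trans (cx_mono (h.monoW (by omega)))
  · exact le_sup_right.trans' (Ipq_le_Lpq_of_lt W F h hab (by omega))

/-- The key lifting property (surjectivity of `I^{p,q}` onto `Ī^{p,q}`). -/
lemma dagger (h : IsRMHS W F) (p q : ℤ)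
    (hD1 : cx V (W (p + q - 1)) = ISum W F (fun ab => ab.1 + ab.2 ≤ p + q - 1)) :
    (F p ⊓ cx V (W (p + q))) ⊓
        (((F q).map (conjC V) ⊓ cx V (W (p + q))) ⊔ cx V (W (p + q - 1)))
      ≤ Ipq W F p q ⊔ (F p ⊓ cx V (W (p + q - 1))) := by
  set S := F p ⊓ cx V (W (p + q)) with hS
  set A := (F q).map (conjC V) ⊓ cx V (W (p + q)) with hA
  set R := F p ⊓ cx V (W (p + q - 1)) with hR
  set LL := Lpq W F p q with hLL
  have hAL : A ≤ LL := le_sup_left.trans' (le_inf inf_le_right inf_le_left)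
  have hCRL : cx V (W (p + q - 1)) ≤ R ⊔ LL := cx_le_rem_sup_Lpq W F h p q hD1
  have hRS : R ≤ S := inf_le_inf le_rfl (cx_mono (h.monoW (by omega)))
  calc S ⊓ (A ⊔ cx V (W (p + q - 1)))
      ≤ S ⊓ (A ⊔ (R ⊔ LL)) := inf_le_inf le_rfl (sup_le_sup_left hCRL _)
    _ = S ⊓ (R ⊔ (A ⊔ LL)) := by rw [sup_left_comm]
    _ = S ⊓ (R ⊔ LL) := by rw [sup_eq_right.mpr hAL]
    _ = (R ⊔ LL) ⊓ S := inf_comm _ _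
    _ = R ⊔ (LL ⊓ S) := sup_inf_assoc_of_le _ hRS
    _ ≤ Ipq W F p q ⊔ R := by
        refine sup_le le_sup_right (le_sup_left.trans' ?_)
        show LL ⊓ S ≤ (cx V (W (p + q)) ⊓ F p) ⊓ Lpq W F p q
        rw [hS, hLL]
        exact le_inf (le_inf (inf_le_right.trans inf_le_right)
          (inf_le_right.trans inf_le_left)) inf_le_left

/-- Decomposition of `F^p ∩ W_n` into top-weight Deligne pieces and a lower-weight
remainder. -/
lemma F_inf_cx_le (h : IsRMHS W F) (n : ℤ)
    (hD1 : cx V (W (n - 1)) = ISum W F (fun ab => ab.1 + ab.2 ≤ n - 1)) (p : ℤ) :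
    F p ⊓ cx V (W n) ≤
      ISum W F (fun ab => p ≤ ab.1 ∧ ab.1 + ab.2 = n) ⊔ (F p ⊓ cx V (W (n - 1))) := by
  obtain ⟨bF, hbF⟩ := h.f_bot
  by_cases hp : bF ≤ p
  · rw [hbF p hp, bot_inf_eq]; exact bot_le
  · refine Int.le_induction_down (motive := fun p _ => F p ⊓ cx V (W n) ≤
        ISum W F (fun ab => p ≤ ab.1 ∧ ab.1 + ab.2 = n) ⊔ (F p ⊓ cx V (W (n - 1))))
        (m := bF) ?_ ?_ p (by omega)
    · show F bF ⊓ cx V (W n) ≤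
          ISum W F (fun ab => bF ≤ ab.1 ∧ ab.1 + ab.2 = n) ⊔ (F bF ⊓ cx V (W (n - 1)))
      rw [hbF bF le_rfl, bot_inf_eq]; exact bot_le
    · intro m _ ihm
      intro x hx
      have hgr := h.gr_sup n m
      have hxW : x ∈ (F m ⊓ cx V (W n)) ⊔
          (((F (n + 1 - m)).map (conjC V) ⊓ cx V (W n)) ⊔ cx V (W (n - 1))) := by
        rw [hgr]; exact hx.2
      rcases Submodule.mem_sup.mp hxW with ⟨u, hu, y, hy, huy⟩
      have hyF : y ∈ F (m - 1) ⊓ cx V (W n) := by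
        have hyx : y = x - u := by rw [← huy]; abel
        rw [hyx]
        exact ⟨Submodule.sub_mem _ hx.1 (h.antiF (by omega) hu.1),
          Submodule.sub_mem _ hx.2 hu.2⟩
      -- apply dagger with p := m - 1, q := n + 1 - m
      have e : (m - 1) + (n + 1 - m) = n := by omega
      have hdag := dagger W F h (m - 1) (n + 1 - m) (by rw [e]; exact hD1)
      rw [e] at hdag
      have hyI : y ∈ Ipq W F (m - 1) (n + 1 - m) ⊔ (F (m - 1) ⊓ cx V (W (n - 1))) :=
        hdag ⟨hyF, hy⟩
      -- now assemble
      have hT : Ipq W F (m - 1) (n + 1 - m) ⊔ (F (m - 1) ⊓ cx V (W (n - 1))) ≤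
          ISum W F (fun ab => m - 1 ≤ ab.1 ∧ ab.1 + ab.2 = n) ⊔
            (F (m - 1) ⊓ cx V (W (n - 1))) :=
        sup_le_sup_right (le_ISum W F (ab := (m - 1, n + 1 - m)) ⟨le_refl _, by omega⟩) _
      have huT : u ∈ ISum W F (fun ab => m - 1 ≤ ab.1 ∧ ab.1 + ab.2 = n) ⊔
          (F (m - 1) ⊓ cx V (W (n - 1))) := by
        refine (sup_le_sup (ISum_mono W F fun ab hab => ⟨by omega, hab.2⟩)
          (inf_le_inf (h.antiF (by omega)) le_rfl)) (ihm hu)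
      rw [← huy]
      exact Submodule.add_mem _ huT (hT hyI)

lemma ISum_le_cx (h : IsRMHS W F) (n : ℤ) :
    ISum W F (fun ab => ab.1 + ab.2 ≤ n) ≤ cx V (W n) :=
  ISum_le W F fun ab hab => (Ipq_le_cx W F _ _).trans (cx_mono (h.monoW hab))

/-- Deligne's splitting, weight part. -/
lemma D1 (h : IsRMHS W F) (n : ℤ) :
    cx V (W n) = ISum W F (fun ab => ab.1 + ab.2 ≤ n) := by
  obtain ⟨a, ha⟩ := h.w_bot
  obtain ⟨aF, haF⟩ := h.f_top
  have main : ∀ n : ℤ, a - 1 ≤ n → cx V (W n) = ISum W F (fun ab => ab.1 + ab.2 ≤ n) := by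
    refine Int.le_induction ?_ ?_
    · refine le_antisymm ?_ (ISum_le_cx W F h _)
      rw [ha _ (by omega), cx_bot]; exact bot_le
    · intro n _ ih
      refine le_antisymm ?_ (ISum_le_cx W F h _)
      have hD1 : cx V (W (n + 1 - 1)) = ISum W F (fun ab => ab.1 + ab.2 ≤ n + 1 - 1) := by
        rw [show n + 1 - 1 = n by omega]; exact ih
      have h1 : cx V (W (n + 1)) = F aF ⊓ cx V (W (n + 1)) := by
        rw [haF aF le_rfl, top_inf_eq]
      rw [h1]
      refine (F_inf_cx_le W F h (n + 1) hD1 aF).trans (sup_le ?_ ?_)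
      · exact ISum_mono W F fun ab hab => by omega
      · refine inf_le_right.trans ?_
        rw [show n + 1 - 1 = n by omega, ih]
        exact ISum_mono W F fun ab hab => by omega
  by_cases hn : a - 1 ≤ n
  · exact main n hn
  · refine le_antisymm ?_ (ISum_le_cx W F h _)
    rw [ha _ (by omega), cx_bot]; exact bot_le

/-- Deligne's splitting, Hodge-filtration part. -/
lemma D2 (h : IsRMHS W F) (n r : ℤ) :
    F r ⊓ cx V (W n) = ISum W F (fun ab => r ≤ ab.1 ∧ ab.1 + ab.2 ≤ n) := by
  obtain ⟨a, ha⟩ := h.w_bot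
  have ge : ∀ n r : ℤ, ISum W F (fun ab => r ≤ ab.1 ∧ ab.1 + ab.2 ≤ n) ≤
      F r ⊓ cx V (W n) := fun n r =>
    ISum_le W F fun ab hab => le_inf ((Ipq_le_F W F _ _).trans (h.antiF hab.1))
      ((Ipq_le_cx W F _ _).trans (cx_mono (h.monoW hab.2)))
  have main : ∀ n : ℤ, a - 1 ≤ n → ∀ r : ℤ,
      F r ⊓ cx V (W n) = ISum W F (fun ab => r ≤ ab.1 ∧ ab.1 + ab.2 ≤ n) := by
    refine Int.le_induction ?_ ?_
    · intro r
      refine le_antisymm ?_ (ge _ _)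
      refine inf_le_right.trans ?_
      rw [ha _ (by omega), cx_bot]
      exact bot_le
    · intro n _ ih r
      refine le_antisymm ?_ (ge _ _)
      have hD1 : cx V (W (n + 1 - 1)) = ISum W F (fun ab => ab.1 + ab.2 ≤ n + 1 - 1) := by
        rw [show n + 1 - 1 = n by omega]; exact D1 W F h n
      refine (F_inf_cx_le W F h (n + 1) hD1 r).trans (sup_le ?_ ?_)
      · exact ISum_mono W F fun ab hab => ⟨hab.1, by omega⟩
      · rw [show n + 1 - 1 = n by omega, ih r]
        exact ISum_mono W F fun ab hab => ⟨hab.1, by omega⟩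
  by_cases hn : a - 1 ≤ n
  · exact main n hn r
  · refine le_antisymm ?_ (ge _ _)
    refine inf_le_right.trans ?_
    rw [ha _ (by omega), cx_bot]
    exact bot_le

end MHS
namespace MHS

variable {V : Type*} [AddCommGroup V] [Module ℝ V]
variable (W : ℤ → Submodule ℝ V) (F : ℤ → Submodule ℂ (ℂ ⊗[ℝ] V))

/-- Independence of the weight-`p+q` Deligne subspaces modulo lower weight. -/
lemma graded_indep (h : IsRMHS W F) (p q : ℤ) :
    Ipq W F p q ⊓ (ISum W F (fun ab => ab.1 + ab.2 = p + q ∧ ab ≠ (p, q)) ⊔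
      cx V (W (p + q - 1))) ≤ cx V (W (p + q - 1)) := by
  intro x hx
  have hxI : x ∈ Ipq W F p q := hx.1
  -- bound for the other pieces
  have hsum : ISum W F (fun ab => ab.1 + ab.2 = p + q ∧ ab ≠ (p, q)) ≤
      (F (p+1) ⊓ cx V (W (p+q))) ⊔
        (((F (q+1)).map (conjC V) ⊓ cx V (W (p+q))) ⊔ cx V (W (p+q-1))) := by
    refine ISum_le W F fun ab hab => ?_
    by_cases hap : p + 1 ≤ ab.1
    · refine le_sup_left.trans' (le_inf ((Ipq_le_F W F _ _).trans (h.antiF hap)) ?_)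
      exact (Ipq_le_cx W F _ _).trans (cx_mono (h.monoW (by omega)))
    · have hb : q + 1 ≤ ab.2 := by
        rcases hab with ⟨hab1, hab2⟩
        have : ab.1 ≠ p := by
          intro hh
          exact hab2 (Prod.ext hh (by omega))
        omega
      refine le_sup_right.trans' ?_
      have hhead := Lpq_le_head_sup_low W F h (p := ab.1) (q := ab.2) (j := 1) le_rfl
      rw [show ab.2 - 1 + 1 = ab.2 by omega] at hhead
      refine ((Ipq_le_Lpq W F _ _).trans hhead).trans (sup_le ?_ ?_)
      · refine le_sup_left.trans' (le_inf ?_ ?_)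
        · exact inf_le_right.trans (map_conjC_mono (h.antiF hb))
        · exact inf_le_left.trans (cx_mono (h.monoW (by omega)))
      · exact le_sup_right.trans' (cx_mono (h.monoW (by omega)))
  have hx2 : x ∈ (F (p+1) ⊓ cx V (W (p+q))) ⊔
      (((F (q+1)).map (conjC V) ⊓ cx V (W (p+q))) ⊔ cx V (W (p+q-1))) :=
    (sup_le hsum (le_sup_right.trans' le_sup_right)) hx.2
  rcases Submodule.mem_sup.mp hx2 with ⟨u, hu, y, hy, huy⟩
  -- x lies in the head of its own L^{p,q}
  have hxQ : x ∈ ((F q).map (conjC V) ⊓ cx V (W (p+q))) ⊔ cx V (W (p+q-1)) := by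
    have hhead := Lpq_le_head_sup_low W F h (p := p) (q := q) (j := 1) le_rfl
    rw [show q - 1 + 1 = q by omega] at hhead
    refine (((Ipq_le_Lpq W F _ _).trans hhead).trans (sup_le ?_ ?_)) hxI
    · exact le_sup_left.trans' (le_inf inf_le_right inf_le_left)
    · exact le_sup_right.trans' (cx_mono (h.monoW (by omega)))
  have hyQ : y ∈ ((F q).map (conjC V) ⊓ cx V (W (p+q))) ⊔ cx V (W (p+q-1)) := by
    refine (sup_le (le_sup_left.trans'
      (inf_le_inf (map_conjC_mono (h.antiF (by omega))) le_rfl)) le_sup_right) hy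
  have huQ : u ∈ ((F q).map (conjC V) ⊓ cx V (W (p+q))) ⊔ cx V (W (p+q-1)) := by
    have : u = x - y := by rw [← huy]; abel
    rw [this]
    exact Submodule.sub_mem _ hxQ hyQ
  -- u lies in lower weight by gr_inf at (p+q, p+1)
  have hgr1 := h.gr_inf (p+q) (p+1)
  rw [show p + q + 1 - (p+1) = q by omega] at hgr1
  have huW : u ∈ cx V (W (p+q-1)) := by
    rw [← hgr1]
    exact ⟨Submodule.mem_sup_left hu, huQ⟩
  -- y lies in lower weight by gr_inf at (p+q, p)
  have hgr2 := h.gr_inf (p+q) p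
  rw [show p + q + 1 - p = q + 1 by omega] at hgr2
  have hyW : y ∈ cx V (W (p+q-1)) := by
    rw [← hgr2]
    constructor
    · have : y = x - u := by rw [← huy]; abel
      rw [this]
      refine Submodule.sub_mem _ (Submodule.mem_sup_left
        ⟨Ipq_le_F W F p q hxI, Ipq_le_cx W F p q hxI⟩) (Submodule.mem_sup_right huW)
    · exact hy
  rw [← huy]
  exact Submodule.add_mem _ huW hyW

/-- Uniqueness of Deligne decompositions: the `I^{p,q}` are independent. -/
lemma Ipq_unique (h : IsRMHS W F) (l : (ℤ × ℤ) →₀ (ℂ ⊗[ℝ] V))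
    (hl : ∀ ab, l ab ∈ Ipq W F ab.1 ab.2) (hsum : (l.sum fun _ y => y) = 0) : l = 0 := by
  obtain ⟨a, ha⟩ := h.w_bot
  have main : ∀ n : ℤ, a - 1 ≤ n → ∀ l : (ℤ × ℤ) →₀ (ℂ ⊗[ℝ] V),
      (∀ ab, l ab ∈ Ipq W F ab.1 ab.2) → (∀ ab ∈ l.support, ab.1 + ab.2 ≤ n) →
      (l.sum fun _ y => y) = 0 → l = 0 := by
    refine Int.le_induction ?_ ?_
    · intro l hl hsupp _
      ext ab
      by_cases hab : ab ∈ l.support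
      · have hmem : l ab ∈ cx V (W (ab.1 + ab.2)) := Ipq_le_cx W F _ _ (hl ab)
        rw [ha _ (by have := hsupp ab hab; omega), cx_bot] at hmem
        simpa using hmem
      · simpa using Finsupp.notMem_support_iff.mp hab
    · intro n _ ih l hl hsupp hsum
      have hzero : ∀ pq : ℤ × ℤ, pq.1 + pq.2 = n + 1 → l pq = 0 := by
        intro pq hpq
        by_cases hmem : pq ∈ l.support
        · have hrest : l pq + ∑ ab ∈ l.support.erase pq, l ab = 0 := by
            rw [Finset.add_sum_erase _ _ hmem]; exact hsum
          have hT : (∑ ab ∈ l.support.erase pq, l ab) ∈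
              ISum W F (fun ab => ab.1 + ab.2 = n + 1 ∧ ab ≠ pq) ⊔ cx V (W n) := by
            refine Submodule.sum_mem _ fun ab hab => ?_
            have hab1 : ab ≠ pq := Finset.ne_of_mem_erase hab
            have hab2 : ab ∈ l.support := Finset.mem_of_mem_erase hab
            by_cases habw : ab.1 + ab.2 = n + 1
            · exact Submodule.mem_sup_left
                ((le_ISum W F (ab := ab) ⟨habw, hab1⟩) (hl ab))
            · refine Submodule.mem_sup_right ?_
              have := Ipq_le_cx W F ab.1 ab.2 (hl ab)
              exact cx_mono (h.monoW (by have := hsupp ab hab2; omega)) this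
          have hlpq : l pq ∈ ISum W F (fun ab => ab.1 + ab.2 = n + 1 ∧ ab ≠ pq) ⊔
              cx V (W n) := by
            have : l pq = - ∑ ab ∈ l.support.erase pq, l ab := by
              rw [eq_neg_iff_add_eq_zero]; exact hrest
            rw [this]
            exact Submodule.neg_mem _ hT
          have hgi := graded_indep W F h pq.1 pq.2
          rw [hpq, Prod.mk.eta, show n + 1 - 1 = n by omega] at hgi
          have hWn : l pq ∈ cx V (W n) := hgi ⟨hl pq, hlpq⟩
          have hbot := Ipq_inf_cx_eq_bot W F h pq.1 pq.2
          rw [hpq, show n + 1 - 1 = n by omega] at hbot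
          have : l pq ∈ (⊥ : Submodule ℂ (ℂ ⊗[ℝ] V)) := by
            rw [← hbot]; exact ⟨hl pq, hWn⟩
          simpa using this
        · exact Finsupp.notMem_support_iff.mp hmem
      refine ih l hl ?_ hsum
      intro ab hab
      have h1 := hsupp ab hab
      by_contra hcon
      exact (Finsupp.mem_support_iff.mp hab) (hzero ab (by omega))
  by_cases hs : l.support.Nonempty
  · refine main (max (a - 1) (l.support.sup' hs (fun ab => ab.1 + ab.2)))
      (le_max_left _ _) l hl ?_ hsum
    intro ab hab
    exact le_trans (Finset.le_sup' (fun ab : ℤ × ℤ => ab.1 + ab.2) hab) (le_max_right _ _)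
  · rw [Finset.not_nonempty_iff_eq_empty] at hs
    exact Finsupp.support_eq_empty.mp hs

end MHS
namespace MHS

variable {V : Type*} [AddCommGroup V] [Module ℝ V]
variable {V₂ : Type*} [AddCommGroup V₂] [Module ℝ V₂]
variable (W : ℤ → Submodule ℝ V) (F : ℤ → Submodule ℂ (ℂ ⊗[ℝ] V))

/-- The conjugate filtration also defines an `ℝ`-mixed Hodge structure. -/
lemma isRMHS_conj (h : IsRMHS W F) : IsRMHS W (fun p => (F p).map (conjC V)) where
  monoW := h.monoW
  antiF := fun _ _ hpq => map_conjC_mono (h.antiF hpq)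
  w_bot := h.w_bot
  w_top := h.w_top
  f_top := by
    obtain ⟨a, haF⟩ := h.f_top
    exact ⟨a, fun p hp => by rw [haF p hp]; exact map_conjC_top⟩
  f_bot := by
    obtain ⟨b, hbF⟩ := h.f_bot
    exact ⟨b, fun p hp => by rw [hbF p hp]; exact Submodule.map_bot _⟩
  gr_inf := by
    intro n p
    have hgr := h.gr_inf n (n+1-p)
    rw [show n+1-(n+1-p) = p by omega] at hgr
    rw [map_conjC_map_conjC, inf_comm]
    exact hgr
  gr_sup := by
    intro n p
    have hgr := h.gr_sup n (n+1-p)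
    rw [show n+1-(n+1-p) = p by omega] at hgr
    rw [map_conjC_map_conjC, sup_left_comm]
    exact hgr

/-- Functoriality of the Deligne subspaces. -/
lemma map_Ipq_le (f : V →ₗ[ℝ] V₂) (W' : ℤ → Submodule ℝ V₂)
    (F' : ℤ → Submodule ℂ (ℂ ⊗[ℝ] V₂))
    (hfW : ∀ i, (W i).map f ≤ W' i) (hfF : ∀ p, (F p).map (f.baseChange ℂ) ≤ F' p)
    (p q : ℤ) : (Ipq W F p q).map (f.baseChange ℂ) ≤ Ipq W' F' p q := by
  have hcx : ∀ i, (cx V (W i)).map (f.baseChange ℂ) ≤ cx V₂ (W' i) := fun i => by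
    rw [map_baseChange_cx]; exact cx_mono (hfW i)
  have hsF : ∀ r : ℤ, ((F r).map (conjC V)).map (f.baseChange ℂ) ≤
      (F' r).map (conjC V₂) := fun r => by
    rw [map_baseChange_conjC]; exact map_conjC_mono (hfF r)
  rw [Ipq, Ipq, Rpq, Rpq, Lpq, Lpq]
  refine (Submodule.map_inf_le _).trans (inf_le_inf ?_ ?_)
  · exact (Submodule.map_inf_le _).trans (inf_le_inf (hcx _) (hfF p))
  · rw [Submodule.map_sup]
    refine sup_le_sup ((Submodule.map_inf_le _).trans (inf_le_inf (hcx _) (hsF q))) ?_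
    rw [Submodule.map_iSup]
    refine iSup_le fun i => ?_
    rw [Submodule.map_iSup]
    refine iSup_le fun hi => le_iSup₂_of_le i hi ?_
    exact (Submodule.map_inf_le _).trans (inf_le_inf (hcx _) (hsF _))

lemma map_conjC_ker (f : V →ₗ[ℝ] V₂) :
    (LinearMap.ker (f.baseChange ℂ)).map (conjC V) = LinearMap.ker (f.baseChange ℂ) := by
  rw [ker_baseChange_eq_cx, map_conjC_cx]

/-- Deligne decompositions of elements of the kernel have all components in the
kernel. -/
lemma exists_finsupp_ker (h : IsRMHS W F) (f : V →ₗ[ℝ] V₂) (W' : ℤ → Submodule ℝ V₂)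
    (F' : ℤ → Submodule ℂ (ℂ ⊗[ℝ] V₂)) (h' : IsRMHS W' F')
    (hfW : ∀ i, (W i).map f ≤ W' i) (hfF : ∀ p, (F p).map (f.baseChange ℂ) ≤ F' p)
    {P : ℤ × ℤ → Prop} {x : ℂ ⊗[ℝ] V} (hx : x ∈ ISum W F P)
    (hxN : x ∈ LinearMap.ker (f.baseChange ℂ)) :
    ∃ l : (ℤ × ℤ) →₀ (ℂ ⊗[ℝ] V),
      (∀ ab, l ab ∈ Ipq W F ab.1 ab.2 ∧ l ab ∈ LinearMap.ker (f.baseChange ℂ)) ∧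
      (∀ ab, ¬ P ab → l ab = 0) ∧ (l.sum fun _ y => y) = x := by
  obtain ⟨l, hlI, hlP, hlsum⟩ := exists_finsupp_of_mem_ISum W F hx
  have hl0 : Finsupp.mapRange (f.baseChange ℂ) (map_zero _) l = 0 := by
    refine Ipq_unique W' F' h' _ (fun ab => ?_) ?_
    · rw [Finsupp.mapRange_apply]
      exact map_Ipq_le W F f W' F' hfW hfF ab.1 ab.2 ⟨l ab, hlI ab, rfl⟩
    · rw [Finsupp.sum_mapRange_index (by simp)]
      have : (l.sum fun _ y => (f.baseChange ℂ) y) = (f.baseChange ℂ) (l.sum fun _ y => y) :=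
        (map_finsuppSum _ _ _).symm
      rw [this, hlsum]
      exact hxN
  refine ⟨l, fun ab => ⟨hlI ab, ?_⟩, hlP, hlsum⟩
  have := congrArg (fun g : (ℤ × ℤ) →₀ (ℂ ⊗[ℝ] V₂) => g ab) hl0
  simp only [Finsupp.mapRange_apply, Finsupp.coe_zero, Pi.zero_apply] at this
  exact this

/-- Strictness on graded pieces, for elements of the kernel. -/
lemma strict_ker (h : IsRMHS W F) (f : V →ₗ[ℝ] V₂) (W' : ℤ → Submodule ℝ V₂)
    (F' : ℤ → Submodule ℂ (ℂ ⊗[ℝ] V₂)) (h' : IsRMHS W' F')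
    (hfW : ∀ i, (W i).map f ≤ W' i) (hfF : ∀ p, (F p).map (f.baseChange ℂ) ≤ F' p)
    (n r : ℤ) :
    ((F r ⊓ cx V (W n)) ⊔ cx V (W (n-1))) ⊓ LinearMap.ker (f.baseChange ℂ) ≤
      (F r ⊓ cx V (W n) ⊓ LinearMap.ker (f.baseChange ℂ)) ⊔
        (cx V (W (n-1)) ⊓ LinearMap.ker (f.baseChange ℂ)) := by
  intro x hx
  have hx1 : x ∈ ISum W F (fun ab => (r ≤ ab.1 ∧ ab.1 + ab.2 ≤ n) ∨ ab.1 + ab.2 ≤ n - 1) := by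
    rw [← ISum_sup, ← D2 W F h n r, ← D1 W F h (n-1)]
    exact hx.1
  obtain ⟨l, hl, hlP, hlsum⟩ :=
    exists_finsupp_ker W F h f W' F' h' hfW hfF hx1 hx.2
  rw [← hlsum]
  refine Submodule.sum_mem _ fun ab hab => ?_
  have hPab : (r ≤ ab.1 ∧ ab.1 + ab.2 ≤ n) ∨ ab.1 + ab.2 ≤ n - 1 := by
    by_contra hcon
    exact Finsupp.mem_support_iff.mp hab (hlP ab hcon)
  rcases hPab with ⟨hr, hn⟩ | hlow
  · refine Submodule.mem_sup_left ⟨⟨?_, ?_⟩, (hl ab).2⟩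
    · exact h.antiF hr ((Ipq_le_F W F _ _) (hl ab).1)
    · exact cx_mono (h.monoW hn) ((Ipq_le_cx W F _ _) (hl ab).1)
  · exact Submodule.mem_sup_right
      ⟨cx_mono (h.monoW hlow) ((Ipq_le_cx W F _ _) (hl ab).1), (hl ab).2⟩

end MHS
namespace MHS

variable {V : Type*} [AddCommGroup V] [Module ℝ V]
variable {V₂ : Type*} [AddCommGroup V₂] [Module ℝ V₂]
variable (W : ℤ → Submodule ℝ V) (F : ℤ → Submodule ℂ (ℂ ⊗[ℝ] V))

/-- The `gr_inf` condition for the kernel filtrations, at the level of `V`. -/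
lemma kerA (h : IsRMHS W F) (f : V →ₗ[ℝ] V₂) (n p : ℤ) :
    ((((F p ⊓ LinearMap.ker (f.baseChange ℂ)) ⊓ cx V (W n)) ⊔ cx V (W (n-1))) ⊓
      ((((F (n+1-p)).map (conjC V) ⊓ LinearMap.ker (f.baseChange ℂ)) ⊓ cx V (W n)) ⊔
        cx V (W (n-1)))) ⊓ LinearMap.ker (f.baseChange ℂ)
    = cx V (W (n-1)) ⊓ LinearMap.ker (f.baseChange ℂ) := by
  refine le_antisymm (le_inf ?_ inf_le_right) (le_inf (le_inf ?_ ?_) inf_le_right)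
  · refine (inf_le_left.trans (inf_le_inf ?_ ?_)).trans (le_of_eq (h.gr_inf n p))
    · exact sup_le_sup_right (le_inf (inf_le_left.trans inf_le_left) inf_le_right) _
    · exact sup_le_sup_right (le_inf (inf_le_left.trans inf_le_left) inf_le_right) _
  · exact inf_le_left.trans le_sup_right
  · exact inf_le_left.trans le_sup_right

/-- The `gr_sup` condition for the kernel filtrations, at the level of `V`. -/
lemma kerB (h : IsRMHS W F) (f : V →ₗ[ℝ] V₂) (W' : ℤ → Submodule ℝ V₂)
    (F' : ℤ → Submodule ℂ (ℂ ⊗[ℝ] V₂)) (h' : IsRMHS W' F')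
    (hfW : ∀ i, (W i).map f ≤ W' i) (hfF : ∀ p, (F p).map (f.baseChange ℂ) ≤ F' p)
    (n p : ℤ) :
    ((((F p ⊓ LinearMap.ker (f.baseChange ℂ)) ⊓ cx V (W n)) ⊔
      ((((F (n+1-p)).map (conjC V) ⊓ LinearMap.ker (f.baseChange ℂ)) ⊓ cx V (W n)) ⊔
        cx V (W (n-1)))) ⊓ LinearMap.ker (f.baseChange ℂ))
    = cx V (W n) ⊓ LinearMap.ker (f.baseChange ℂ) := by
  set N := LinearMap.ker (f.baseChange ℂ) with hN
  refine le_antisymm (le_inf ?_ inf_le_right) ?_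
  · refine inf_le_left.trans (sup_le inf_le_right (sup_le
      inf_le_right (cx_mono (h.monoW (by omega)))))
  · rintro x ⟨hxC, hxN⟩
    have hfFσ : ∀ r : ℤ, ((F r).map (conjC V)).map (f.baseChange ℂ) ≤
        (F' r).map (conjC V₂) := fun r => by
      rw [map_baseChange_conjC]; exact map_conjC_mono (hfF r)
    have hx1 : x ∈ ISum W F (fun ab => ab.1 + ab.2 ≤ n) := by
      rw [← D1 W F h n]; exact hxC
    obtain ⟨l, hl, hlP, hlsum⟩ :=
      exists_finsupp_ker W F h f W' F' h' hfW hfF hx1 hxN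
    refine ⟨?_, hxN⟩
    rw [← hlsum]
    refine Submodule.sum_mem _ fun ab hab => ?_
    have hPab : ab.1 + ab.2 ≤ n := by
      by_contra hcon
      exact Finsupp.mem_support_iff.mp hab (hlP ab hcon)
    by_cases hap : p ≤ ab.1
    · refine Submodule.mem_sup_left ⟨⟨?_, (hl ab).2⟩, ?_⟩
      · exact h.antiF hap ((Ipq_le_F W F _ _) (hl ab).1)
      · exact cx_mono (h.monoW hPab) ((Ipq_le_cx W F _ _) (hl ab).1)
    · by_cases hlow : ab.1 + ab.2 ≤ n - 1
      · exact Submodule.mem_sup_right (Submodule.mem_sup_right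
          (cx_mono (h.monoW hlow) ((Ipq_le_cx W F _ _) (hl ab).1)))
      · -- top weight, small F-index: use the σ-side strictness
        have hw : ab.1 + ab.2 = n := by omega
        have hy : l ab ∈ ((F (n+1-p)).map (conjC V) ⊓ cx V (W n)) ⊔ cx V (W (n-1)) := by
          have hhead := Lpq_le_head_sup_low W F h (p := ab.1) (q := ab.2) (j := 1) le_rfl
          rw [show ab.2 - 1 + 1 = ab.2 by omega] at hhead
          refine (((Ipq_le_Lpq W F _ _).trans hhead).trans (sup_le ?_ ?_)) (hl ab).1
          · refine le_sup_left.trans' (le_inf ?_ ?_)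
            · exact inf_le_right.trans (map_conjC_mono (h.antiF (by omega)))
            · exact inf_le_left.trans (cx_mono (h.monoW (by omega)))
          · exact le_sup_right.trans' (cx_mono (h.monoW (by omega)))
        have hstrict := strict_ker W (fun r => (F r).map (conjC V))
          (isRMHS_conj W F h) f W' (fun r => (F' r).map (conjC V₂))
          (isRMHS_conj W' F' h') hfW hfFσ n (n+1-p)
        have hmem := hstrict ⟨hy, (hl ab).2⟩
        have hle : ((F (n+1-p)).map (conjC V) ⊓ cx V (W n) ⊓ N) ⊔ (cx V (W (n-1)) ⊓ N) ≤
            (((F (n+1-p)).map (conjC V) ⊓ N) ⊓ cx V (W n)) ⊔ cx V (W (n-1)) :=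
          sup_le_sup (le_inf (le_inf (inf_le_left.trans inf_le_left) inf_le_right)
            (inf_le_left.trans inf_le_right)) inf_le_left
        exact Submodule.mem_sup_right (hle hmem)
end MHS
/-- The kernel of a morphism of `ℝ`-mixed Hodge structures,
with the filtrations `W_i(K) = W_i ∩ K` and `F^p(K_ℂ) = F^p ∩ ker f_ℂ`
(transported along the identification of `K_ℂ = ℂ ⊗ K` with `ker f_ℂ ⊆ V_ℂ`),
is an `ℝ`-mixed Hodge structure on `K = ker f`. -/
theorem kernel_is_RMHS
    (V V' : Type*) [AddCommGroup V] [Module ℝ V] [FiniteDimensional ℝ V]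
    [AddCommGroup V'] [Module ℝ V'] [FiniteDimensional ℝ V']
    (W : ℤ → Submodule ℝ V) (F : ℤ → Submodule ℂ (ℂ ⊗[ℝ] V))
    (W' : ℤ → Submodule ℝ V') (F' : ℤ → Submodule ℂ (ℂ ⊗[ℝ] V'))
    (h : MHS.IsRMHS W F) (h' : MHS.IsRMHS W' F')
    (f : V →ₗ[ℝ] V')
    (hfW : ∀ i : ℤ, (W i).map f ≤ W' i)
    (hfF : ∀ p : ℤ, (F p).map (f.baseChange ℂ) ≤ F' p) :
    MHS.IsRMHS (V := ↥(LinearMap.ker f))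
      (fun i => (W i).comap (LinearMap.ker f).subtype)
      (fun p => (F p ⊓ LinearMap.ker (f.baseChange ℂ)).comap
        (((LinearMap.ker f).subtype).baseChange ℂ)) := by
  classical
  set K : Submodule ℝ V := LinearMap.ker f with hKdef
  set j : ℂ ⊗[ℝ] ↥K →ₗ[ℂ] ℂ ⊗[ℝ] V := K.subtype.baseChange ℂ with hjdef
  set N : Submodule ℂ (ℂ ⊗[ℝ] V) := LinearMap.ker (f.baseChange ℂ) with hNdef
  have hsubinj : Function.Injective K.subtype := Submodule.injective_subtype _
  have hjinj : Function.Injective j := MHS.baseChange_injective hsubinj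
  have hjN : ∀ x : ℂ ⊗[ℝ] ↥K, j x ∈ N := by
    intro x
    rw [hNdef, LinearMap.mem_ker, MHS.eq_zero_iff_reT_imT]
    constructor
    · rw [MHS.reT_baseChange, hjdef, MHS.reT_baseChange]
      exact LinearMap.mem_ker.mp (MHS.reT (↥K) x).2
    · rw [MHS.imT_baseChange, hjdef, MHS.imT_baseChange]
      exact LinearMap.mem_ker.mp (MHS.imT (↥K) x).2
  have hrange : LinearMap.range j = N := by
    rw [hjdef, hNdef, LinearMap.range_eq_map, ← MHS.cx_top, MHS.map_baseChange_cx,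
      Submodule.map_subtype_top, MHS.ker_baseChange_eq_cx]
  have hT1 : ∀ m : ℤ, MHS.cx ↥K ((W m).comap K.subtype) = (MHS.cx V (W m)).comap j := by
    intro m; ext x
    simp only [MHS.mem_cx_iff, Submodule.mem_comap, hjdef, MHS.reT_baseChange,
      MHS.imT_baseChange]
  have hcomapN : ∀ S : Submodule ℂ (ℂ ⊗[ℝ] V), S.comap j = (S ⊓ N).comap j := by
    intro S; ext x
    simp only [Submodule.mem_comap, Submodule.mem_inf]
    exact ⟨fun hh => ⟨hh, hjN x⟩, fun hh => hh.1⟩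
  have hcomapsup : ∀ A B : Submodule ℂ (ℂ ⊗[ℝ] V), A ≤ N →
      (A ⊔ B).comap j = A.comap j ⊔ B.comap j := by
    intro A B hA
    exact MHS.comap_sup_of_le_range hjinj (le_trans hA (le_of_eq hrange.symm))
  have hconj : ∀ q : ℤ, ((F q ⊓ N).comap j).map (MHS.conjC ↥K)
      = (((F q).map (MHS.conjC V) ⊓ N)).comap j := by
    intro q
    rw [hjdef, MHS.map_conjC_comap_baseChange hsubinj
      (by rw [← hjdef, hrange]; exact inf_le_right),
      MHS.map_conjC_inf, hNdef, MHS.map_conjC_ker]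
  refine
    { monoW := fun i i' hii' => Submodule.comap_mono (h.monoW hii')
      antiF := fun p p' hpp' => Submodule.comap_mono (inf_le_inf (h.antiF hpp') le_rfl)
      w_bot := ?_
      w_top := ?_
      f_top := ?_
      f_bot := ?_
      gr_inf := ?_
      gr_sup := ?_ }
  · obtain ⟨a, ha⟩ := h.w_bot
    exact ⟨a, fun i hi => by
      rw [ha i hi, Submodule.comap_bot, Submodule.ker_subtype]⟩
  · obtain ⟨b, hb⟩ := h.w_top
    exact ⟨b, fun i hi => by rw [hb i hi, Submodule.comap_top]⟩
  · obtain ⟨a, ha⟩ := h.f_top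
    refine ⟨a, fun p hp => ?_⟩
    rw [ha p hp, top_inf_eq]
    rw [eq_top_iff]
    intro x _
    exact hjN x
  · obtain ⟨b, hb⟩ := h.f_bot
    refine ⟨b, fun p hp => ?_⟩
    rw [hb p hp, bot_inf_eq, Submodule.comap_bot, LinearMap.ker_eq_bot.mpr hjinj]
  · intro n p
    rw [hT1 n, hT1 (n-1), hconj (n+1-p), ← Submodule.comap_inf, ← Submodule.comap_inf,
      ← hcomapsup ((F p ⊓ N) ⊓ MHS.cx V (W n)) (MHS.cx V (W (n-1)))
        (inf_le_left.trans inf_le_right),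
      ← hcomapsup (((F (n+1-p)).map (MHS.conjC V) ⊓ N) ⊓ MHS.cx V (W n))
        (MHS.cx V (W (n-1))) (inf_le_left.trans inf_le_right),
      ← Submodule.comap_inf,
      hcomapN ((((F p ⊓ N) ⊓ MHS.cx V (W n)) ⊔ MHS.cx V (W (n-1))) ⊓
        ((((F (n+1-p)).map (MHS.conjC V) ⊓ N) ⊓ MHS.cx V (W n)) ⊔ MHS.cx V (W (n-1)))),
      hcomapN (MHS.cx V (W (n-1)))]
    rw [MHS.kerA W F h f n p]
  · intro n p
    rw [hT1 n, hT1 (n-1), hconj (n+1-p), ← Submodule.comap_inf, ← Submodule.comap_inf,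
      ← hcomapsup (((F (n+1-p)).map (MHS.conjC V) ⊓ N) ⊓ MHS.cx V (W n))
        (MHS.cx V (W (n-1))) (inf_le_left.trans inf_le_right),
      ← hcomapsup ((F p ⊓ N) ⊓ MHS.cx V (W n))
        (((((F (n+1-p)).map (MHS.conjC V) ⊓ N) ⊓ MHS.cx V (W n)) ⊔ MHS.cx V (W (n-1))))
        (inf_le_left.trans inf_le_right),
      hcomapN (((F p ⊓ N) ⊓ MHS.cx V (W n)) ⊔
        ((((F (n+1-p)).map (MHS.conjC V) ⊓ N) ⊓ MHS.cx V (W n)) ⊔ MHS.cx V (W (n-1)))),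
      hcomapN (MHS.cx V (W n))]
    rw [MHS.kerB W F h f W' F' h' hfW hfF n p]
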